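/- In any turn-based game structure satisfying formulas (1)–(5) of the reduction, the formula (6), AG[(m ∧ □) ⇒ [1]((⟨2⟩X³(v₁ ∧ Xα) ∧ ⟨2⟩X³(v₂ ∧ Xα)) ⇒ [2]⟨∅⟩X³Xα)], forces every cell of the grid to have exactly two successor cells: one whose entry state is labelled v₁ and one whose entry state is labelled v₂. In particular, if some cell had three or more successor cells, Player 1 would have a memoryless strategy colouring one v₁-successor cell and one v₂-successor cell with α and a third successor cell with β, against which Player 2 would have a memoryless strategy reaching a β-coloured successor cell, violating the formula. -/

import Mathlib

/-!
# ATL with strategy contexts and memoryless strategies (ATL_sc^0)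

Players and atomic propositions are coded as natural numbers.
-/

/-- A concurrent game structure: states labelled with atomic propositions (coded as
naturals), players coded as naturals, and a transition function assigning to each state
and each tuple of moves (one move per player) a successor state. -/
structure CGS : Type 1 where
  State : Type
  Move : Type
  move_nonempty : Nonempty Move
  label : State → ℕ → Prop
  trans : State → (ℕ → Move) → State

/-- Player `p` controls state `s`: the successor from `s` only depends on `p`'s move. -/
def Controls (G : CGS) (p : ℕ) (s : G.State) : Prop :=
  ∀ mv mv' : ℕ → G.Move, mv p = mv' p → G.trans s mv = G.trans s mv'

/-- A game structure is turn-based if every state is controlled by a single player. -/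
def TurnBased (G : CGS) : Prop := ∀ s : G.State, ∃ p : ℕ, Controls G p s

/-- A (memoryless) strategy context: a partial assignment of memoryless strategies
(functions from states to moves) to players. -/
def Ctx (G : CGS) : Type := ℕ → Option (G.State → G.Move)

/-- The empty strategy context. -/
def emptyCtx (G : CGS) : Ctx G := fun _ => none

/-- `π` is an outcome from state `s` compatible with the memoryless context `ctx`:
at each step, every player to whom `ctx` assigns a strategy plays according to it. -/
def IsOutcome (G : CGS) (ctx : Ctx G) (s : G.State) (π : ℕ → G.State) : Prop :=
  π 0 = s ∧ ∀ i : ℕ, ∃ mv : ℕ → G.Move,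
    (∀ p σ, ctx p = some σ → mv p = σ (π i)) ∧ π (i + 1) = G.trans (π i) mv

/-- Formulas of ATL_sc^0 (with LTL path modalities `X` and `U`); coalitions are
finite lists of players. -/
inductive Formula : Type where
  | atom : ℕ → Formula
  | neg : Formula → Formula
  | conj : Formula → Formula → Formula
  | next : Formula → Formula
  | untl : Formula → Formula → Formula
  | strat : List ℕ → Formula → Formula

/-- Satisfaction of a formula on a path, under a memoryless strategy context.
`strat A φ` (the quantifier `⟨A⟩φ`) assigns new memoryless strategies to the players
of `A`, keeps the strategies of the other players from the current context, and
requires `φ` on all outcomes compatible with the resulting context. -/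
def sat (G : CGS) : Formula → Ctx G → (ℕ → G.State) → Prop
  | .atom p, _, π => G.label (π 0) p
  | .neg φ, ctx, π => ¬ sat G φ ctx π
  | .conj φ ψ, ctx, π => sat G φ ctx π ∧ sat G ψ ctx π
  | .next φ, ctx, π => sat G φ ctx (fun n => π (n + 1))
  | .untl φ ψ, ctx, π => ∃ j : ℕ, sat G ψ ctx (fun n => π (n + j)) ∧
      ∀ k < j, sat G φ ctx (fun n => π (n + k))
  | .strat A φ, ctx, π => ∃ ctx' : Ctx G,
      (∀ p, p ∉ A → ctx' p = ctx p) ∧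
      (∀ p, p ∈ A → ∃ σ, ctx' p = some σ) ∧
      ∀ π' : ℕ → G.State, IsOutcome G ctx' (π 0) π' → sat G φ ctx' π'

/-- A state satisfies a formula (under a given context) if the formula holds on all
outcomes from that state compatible with the context. -/
def StateSatCtx (G : CGS) (ctx : Ctx G) (s : G.State) (φ : Formula) : Prop :=
  ∀ π : ℕ → G.State, IsOutcome G ctx s π → sat G φ ctx π

/-- A state satisfies a formula under the empty strategy context. -/
def StateSat (G : CGS) (s : G.State) (φ : Formula) : Prop :=
  StateSatCtx G (emptyCtx G) s φ

/-- Satisfiability of an ATL_sc^0 formula in a turn-based game structure. -/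
def SatTB (φ : Formula) : Prop :=
  ∃ G : CGS, TurnBased G ∧ ∃ s : G.State, StateSat G s φ

/-- An explicit injective encoding of formulas as natural numbers. -/
def encodeF : Formula → ℕ
  | .atom n => Nat.pair 0 n
  | .neg φ => Nat.pair 1 (encodeF φ)
  | .conj φ ψ => Nat.pair 2 (Nat.pair (encodeF φ) (encodeF ψ))
  | .next φ => Nat.pair 3 (encodeF φ)
  | .untl φ ψ => Nat.pair 4 (Nat.pair (encodeF φ) (encodeF ψ))
  | .strat A φ => Nat.pair 5 (Nat.pair (Encodable.encode A) (encodeF φ))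


namespace Formula

/-- Disjunction. -/
def fOr (φ ψ : Formula) : Formula := neg (conj (neg φ) (neg ψ))
/-- Implication. -/
def fImp (φ ψ : Formula) : Formula := fOr (neg φ) ψ
/-- Bi-implication. -/
def fIff (φ ψ : Formula) : Formula := conj (fImp φ ψ) (fImp ψ φ)
/-- True. -/
def top : Formula := fOr (atom 0) (neg (atom 0))
/-- False. -/
def bot : Formula := neg top
/-- Eventually (`F`). -/
def fut (φ : Formula) : Formula := untl top φ
/-- Globally (`G`). -/
def glob (φ : Formula) : Formula := neg (fut (neg φ))
/-- Weak until (`W`): `G φ ∨ φ U ψ`. -/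
def wuntl (φ ψ : Formula) : Formula := fOr (glob φ) (untl φ ψ)
/-- Finite disjunction. -/
def bigOr (l : List Formula) : Formula := l.foldr fOr bot
/-- Finite conjunction. -/
def bigAnd (l : List Formula) : Formula := l.foldr conj top
/-- Universal path quantification `A`, encoded as `⟨∅⟩`. -/
def Aq (φ : Formula) : Formula := strat [] φ
/-- Existential path quantification `E`. -/
def Eq (φ : Formula) : Formula := neg (Aq (neg φ))
/-- The strategy quantifier `⟨p⟩` for a single player `p`. -/
def D (p : ℕ) (φ : Formula) : Formula := strat [p] φ
/-- The dual quantifier `[p]` over memoryless strategies of player `p`. -/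
def B (p : ℕ) (φ : Formula) : Formula := neg (D p (neg φ))
/-- Two nested next modalities. -/
def X2 (φ : Formula) : Formula := next (next φ)
/-- Three nested next modalities. -/
def X3 (φ : Formula) : Formula := next (X2 φ)
/-- Four nested next modalities. -/
def X4 (φ : Formula) : Formula := next (X3 φ)

end Formula

open Formula

/-! Coding of the atomic propositions `{m, c, v₁, v₂, α, β, □, ○} ∪ T`:
`m ↦ 0`, `c ↦ 1`, `v₁ ↦ 2`, `v₂ ↦ 3`, `α ↦ 4`, `β ↦ 5`, `□ ↦ 6`, `○ ↦ 7`,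
and tile `t ↦ 8 + t`. -/

def pm : Formula := Formula.atom 0
def pc : Formula := Formula.atom 1
def pv1 : Formula := Formula.atom 2
def pv2 : Formula := Formula.atom 3
def pal : Formula := Formula.atom 4
def pbe : Formula := Formula.atom 5
def psq : Formula := Formula.atom 6
def pci : Formula := Formula.atom 7
def ptile (t : ℕ) : Formula := Formula.atom (8 + t)

/-- A tile system: tiles are `0, …, numTiles - 1`, with horizontal and vertical
matching relations given as finite lists of pairs. -/
structure TileSystem : Type where
  numTiles : ℕ
  H : List (ℕ × ℕ)
  V : List (ℕ × ℕ)

/-- The tile system admits a tiling of the quadrant ℕ×ℕ. -/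
def TilesQuadrant (ts : TileSystem) : Prop :=
  ∃ τ : ℕ → ℕ → ℕ, (∀ i j, τ i j < ts.numTiles) ∧
    (∀ i j, (τ i j, τ (i + 1) j) ∈ ts.H) ∧
    (∀ i j, (τ i j, τ i (j + 1)) ∈ ts.V)

/-- An explicit encoding of tile systems as natural numbers. -/
def encodeTS (ts : TileSystem) : ℕ := Encodable.encode (ts.numTiles, ts.H, ts.V)

/-- The list of tiles of a tile system. -/
def tilesOf (ts : TileSystem) : List ℕ := List.range ts.numTiles

/-- The atomic propositions `AP' = {m, c} ∪ T`. -/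
def APprime (ts : TileSystem) : List ℕ := 0 :: 1 :: (tilesOf ts).map (fun t => 8 + t)

/-- The atomic propositions `AP = AP' ∪ {v₁, v₂, α, β, □, ○}`. -/
def APall (ts : TileSystem) : List ℕ := APprime ts ++ [2, 3, 4, 5, 6, 7]

/-- Formula (1): labelling discipline (each state has exactly one proposition of `AP'`),
`A(m W c)`, the shape of choice and tile states, and turn-basedness via
`□ ⇔ ¬○` and `EX p ⇔ ⟨i⟩X p`. -/
def phi1 (ts : TileSystem) : Formula :=
  bigAnd [
    Aq (glob (bigOr ((APprime ts).map fun p =>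
      conj (atom p) (bigAnd (((APprime ts).filter (· ≠ p)).map fun q => neg (atom q)))))),
    Aq (wuntl pm pc),
    Aq (glob (fImp pc (bigAnd [psq,
      bigAnd ((tilesOf ts).map fun t => D 1 (next (ptile t))),
      Aq (next (bigOr ((tilesOf ts).map fun t => Aq (glob (ptile t)))))]))),
    Aq (glob (bigAnd [
      fIff psq (neg pci),
      fImp psq (bigAnd ((APall ts).map fun p =>
        fIff (Eq (next (atom p))) (D 1 (next (atom p))))),
      fImp pci (bigAnd ((APall ts).map fun p =>
        fIff (Eq (next (atom p))) (D 2 (next (atom p)))))]))]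

/-- Formula (2): the four-state cell gadgets: entry `□`-states labelled `m` and
exactly one of `v₁, v₂`, middle `○`-states coloured `α` or `β` by Player 1,
exit `○`-states with neither colour. -/
def phi2 (_ts : TileSystem) : Formula :=
  bigAnd [
    Aq (glob (fImp pm (fOr (bigAnd [psq, neg pal, neg pbe])
      (conj pci (neg (conj pal pbe)))))),
    Aq (glob (conj (fImp (conj pm psq) (fIff pv1 (neg pv2)))
      (fImp (fOr pv1 pv2) (conj pm psq)))),
    Aq (glob (fImp (conj pm psq) (bigAnd [
      Aq (next (bigAnd [pm, pci, fOr pal pbe,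
        Aq (next (bigAnd [pm, pci, neg pal, neg pbe]))])),
      D 1 (next pal),
      D 1 (next pbe)])))]

/-- Formula (3): constraints on transitions leaving a cell. -/
def phi3 (_ts : TileSystem) : Formula :=
  bigAnd [
    Aq (glob (fImp (bigOr [Eq (next pc), Eq (next pv1), Eq (next pv2)])
      (bigAnd [pm, pci, neg pal, neg pbe]))),
    Aq (glob (fImp (bigAnd [pm, pci, neg pal, neg pbe])
      (bigAnd [Eq (next pc), Eq (next pv1), Eq (next pv2),
        Aq (next (bigOr [pc, pv1, pv2]))])))]

/-- Formula (4): the tiling constraints, under a memoryless strategy of Player 1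
choosing a tile for each cell (distances adapted to the four-state cell gadget). -/
def phi4 (ts : TileSystem) : Formula :=
  D 1 (glob (bigAnd [
    fImp pv1 (bigOr (ts.H.map fun p =>
      conj (D 2 (X4 (ptile p.1))) (D 2 (X3 (conj pv2 (X4 (ptile p.2))))))),
    fImp pv2 (bigOr (ts.H.map fun p =>
      conj (D 2 (X4 (ptile p.1))) (D 2 (X3 (conj pv1 (X4 (ptile p.2))))))),
    fImp pv1 (bigOr (ts.V.map fun p =>
      conj (D 2 (X4 (ptile p.1))) (D 2 (X3 (conj pv1 (X4 (ptile p.2))))))),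
    fImp pv2 (bigOr (ts.V.map fun p =>
      conj (D 2 (X4 (ptile p.1))) (D 2 (X3 (conj pv2 (X4 (ptile p.2)))))))]))

/-- Formula (5): `AG[(m ∧ □) ⇒ [2](⟨∅⟩X³(c ∨ v₁) ∨ ⟨∅⟩X³(c ∨ v₂))]`,
forcing each cell to have a single exit state. -/
def phi5 : Formula :=
  Aq (glob (fImp (conj pm psq)
    (B 2 (fOr (Aq (X3 (fOr pc pv1))) (Aq (X3 (fOr pc pv2)))))))

/-- Formula (6): `AG[(m ∧ □) ⇒ [1]((⟨2⟩X³(v₁ ∧ Xα) ∧ ⟨2⟩X³(v₂ ∧ Xα)) ⇒ [2]⟨∅⟩X³Xα)]`,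
forcing each cell to have exactly two successor cells. -/
def phi6 : Formula :=
  Aq (glob (fImp (conj pm psq)
    (B 1 (fImp (conj (D 2 (X3 (conj pv1 (next pal)))) (D 2 (X3 (conj pv2 (next pal)))))
      (B 2 (Aq (X3 (next pal))))))))

/-- Formula (7): `[1]⟨∅⟩G[(m ∧ □ ∧ v₁) ⇒ ((⟨2⟩X³(v₁ ∧ [2]X³Xα)) ⇒
(⟨2⟩X³(¬v₁ ∧ X³(¬v₁ ∧ Xα))))]` together with its `v₂`-counterpart, forcing the two
successor cells of every cell to share a common successor cell. -/
def phi7 : Formula :=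
  conj
    (B 1 (Aq (glob (fImp (bigAnd [pm, psq, pv1])
      (fImp (D 2 (X3 (conj pv1 (B 2 (X3 (next pal))))))
        (D 2 (X3 (conj (neg pv1) (X3 (conj (neg pv1) (next pal)))))))))))
    (B 1 (Aq (glob (fImp (bigAnd [pm, psq, pv2])
      (fImp (D 2 (X3 (conj pv2 (B 2 (X3 (next pal))))))
        (D 2 (X3 (conj (neg pv2) (X3 (conj (neg pv2) (next pal)))))))))))

/-- The reduction formula `Φ_{T,H,V}`: the conjunction of formulas (1)–(7), together
with the requirement that the initial state be a square state of a cell of the main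
part. -/
def Phi (ts : TileSystem) : Formula :=
  bigAnd [conj pm psq, phi1 ts, phi2 ts, phi3 ts, phi4 ts, phi5, phi6, phi7]

/-- The atomic propositions occurring in a formula. -/
def atomsOf : Formula → List ℕ
  | .atom n => [n]
  | .neg φ => atomsOf φ
  | .conj φ ψ => atomsOf φ ++ atomsOf ψ
  | .next φ => atomsOf φ
  | .untl φ ψ => atomsOf φ ++ atomsOf ψ
  | .strat _ φ => atomsOf φ

/-- The players occurring (in coalitions) in a formula. -/
def playersOf : Formula → List ℕ
  | .atom _ => []
  | .neg φ => playersOf φ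
  | .conj φ ψ => playersOf φ ++ playersOf ψ
  | .next φ => playersOf φ
  | .untl φ ψ => playersOf φ ++ playersOf ψ
  | .strat A φ => A ++ playersOf φ


/-- One-step successor relation of a game structure. -/
def Step (G : CGS) (s s' : G.State) : Prop := ∃ mv : ℕ → G.Move, G.trans s mv = s'

/-- Three-step successor relation (the entry state of a cell gadget reaches the entry
states of its successor cells, and its choice state, in exactly three steps). -/
def Step3 (G : CGS) (s s' : G.State) : Prop :=
  ∃ x y : G.State, Step G s x ∧ Step G x y ∧ Step G y s'

/-- Reachability in a game structure. -/
def Reach (G : CGS) : G.State → G.State → Prop := Relation.ReflTransGen (Step G)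

section Helpers

open Formula

noncomputable def dmove (G : CGS) : G.Move := Classical.choice G.move_nonempty

noncomputable def mvOf (G : CGS) (ctx : Ctx G) (v : G.State) : ℕ → G.Move :=
  fun p => (ctx p).elim (dmove G) (fun σ => σ v)

lemma mvOf_eq {G : CGS} {ctx : Ctx G} {p : ℕ} {σ : G.State → G.Move}
    (h : ctx p = some σ) (v : G.State) : mvOf G ctx v p = σ v := by
  simp [mvOf, h]

noncomputable def cstep (G : CGS) (ctx : Ctx G) (v : G.State) : G.State :=
  G.trans v (mvOf G ctx v)

noncomputable def cpath (G : CGS) (ctx : Ctx G) (s : G.State) : ℕ → G.State :=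
  fun n => (cstep G ctx)^[n] s

lemma cpath_outcome (G : CGS) (ctx : Ctx G) (s : G.State) :
    IsOutcome G ctx s (cpath G ctx s) := by
  refine ⟨rfl, fun i => ⟨mvOf G ctx (cpath G ctx s i), fun p σ h => mvOf_eq h _, ?_⟩⟩
  simp [cpath, Function.iterate_succ_apply']
  rfl

def pre {G : CGS} (s : G.State) (π : ℕ → G.State) : ℕ → G.State
  | 0 => s
  | n + 1 => π n

lemma pre_outcome {G : CGS} {ctx : Ctx G} {s x : G.State} {π : ℕ → G.State}
    (hπ : IsOutcome G ctx x π) (mv : ℕ → G.Move)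
    (hmv : ∀ p σ, ctx p = some σ → mv p = σ s) (ht : G.trans s mv = x) :
    IsOutcome G ctx s (pre s π) := by
  refine ⟨rfl, fun i => ?_⟩
  cases i with
  | zero => exact ⟨mv, hmv, by simpa [pre, hπ.1] using ht.symm⟩
  | succ n =>
      obtain ⟨mv', h1, h2⟩ := hπ.2 n
      exact ⟨mv', by simpa [pre] using h1, by simpa [pre] using h2⟩

lemma outcome_empty {G : CGS} {s : G.State} {π : ℕ → G.State} :
    IsOutcome G (emptyCtx G) s π ↔ π 0 = s ∧ ∀ i, Step G (π i) (π (i + 1)) := by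
  constructor
  · rintro ⟨h0, h⟩
    exact ⟨h0, fun i => by obtain ⟨mv, _, ht⟩ := h i; exact ⟨mv, ht.symm⟩⟩
  · rintro ⟨h0, h⟩
    refine ⟨h0, fun i => ?_⟩
    obtain ⟨mv, ht⟩ := h i
    exact ⟨mv, fun p σ hp => by simp [emptyCtx] at hp, ht.symm⟩

@[simp] lemma sat_atom {G : CGS} {n : ℕ} {ctx : Ctx G} {π : ℕ → G.State} :
    sat G (.atom n) ctx π ↔ G.label (π 0) n := Iff.rfl

@[simp] lemma sat_neg {G : CGS} {φ : Formula} {ctx : Ctx G} {π : ℕ → G.State} :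
    sat G (.neg φ) ctx π ↔ ¬ sat G φ ctx π := Iff.rfl

@[simp] lemma sat_conj {G : CGS} {φ ψ : Formula} {ctx : Ctx G} {π : ℕ → G.State} :
    sat G (.conj φ ψ) ctx π ↔ sat G φ ctx π ∧ sat G ψ ctx π := Iff.rfl

@[simp] lemma sat_next {G : CGS} {φ : Formula} {ctx : Ctx G} {π : ℕ → G.State} :
    sat G (.next φ) ctx π ↔ sat G φ ctx (fun n => π (n + 1)) := Iff.rfl

lemma sat_untl {G : CGS} {φ ψ : Formula} {ctx : Ctx G} {π : ℕ → G.State} :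
    sat G (.untl φ ψ) ctx π ↔ ∃ j : ℕ, sat G ψ ctx (fun n => π (n + j)) ∧
      ∀ k < j, sat G φ ctx (fun n => π (n + k)) := Iff.rfl

lemma sat_strat {G : CGS} {A : List ℕ} {φ : Formula} {ctx : Ctx G} {π : ℕ → G.State} :
    sat G (.strat A φ) ctx π ↔ ∃ ctx' : Ctx G,
      (∀ p, p ∉ A → ctx' p = ctx p) ∧
      (∀ p, p ∈ A → ∃ σ, ctx' p = some σ) ∧
      ∀ π' : ℕ → G.State, IsOutcome G ctx' (π 0) π' → sat G φ ctx' π' := Iff.rfl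

@[simp] lemma sat_fOr {G : CGS} {φ ψ : Formula} {ctx : Ctx G} {π : ℕ → G.State} :
    sat G (fOr φ ψ) ctx π ↔ sat G φ ctx π ∨ sat G ψ ctx π := by
  simp [fOr]; tauto

@[simp] lemma sat_fImp {G : CGS} {φ ψ : Formula} {ctx : Ctx G} {π : ℕ → G.State} :
    sat G (fImp φ ψ) ctx π ↔ (sat G φ ctx π → sat G ψ ctx π) := by
  simp [fImp]; tauto

@[simp] lemma sat_top {G : CGS} {ctx : Ctx G} {π : ℕ → G.State} :
    sat G top ctx π := by
  simp [top]; tauto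

lemma sat_glob {G : CGS} {φ : Formula} {ctx : Ctx G} {π : ℕ → G.State} :
    sat G (glob φ) ctx π ↔ ∀ j, sat G φ ctx (fun n => π (n + j)) := by
  simp [glob, fut, sat_untl]

@[simp] lemma sat_bigAnd {G : CGS} {l : List Formula} {ctx : Ctx G} {π : ℕ → G.State} :
    sat G (bigAnd l) ctx π ↔ ∀ φ ∈ l, sat G φ ctx π := by
  induction l with
  | nil => simp [bigAnd]
  | cons a l ih => simp [bigAnd] at ih ⊢; tauto

@[simp] lemma sat_bigOr {G : CGS} {l : List Formula} {ctx : Ctx G} {π : ℕ → G.State} :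
    sat G (bigOr l) ctx π ↔ ∃ φ ∈ l, sat G φ ctx π := by
  induction l with
  | nil => simp [bigOr, bot]
  | cons a l ih =>
      show sat G (fOr a (bigOr l)) ctx π ↔ _
      rw [sat_fOr, ih]
      simp

lemma sat_Aq {G : CGS} {φ : Formula} {ctx : Ctx G} {π : ℕ → G.State} :
    sat G (Aq φ) ctx π ↔ ∀ π', IsOutcome G ctx (π 0) π' → sat G φ ctx π' := by
  constructor
  · rintro ⟨ctx', h1, _, h3⟩
    have : ctx' = ctx := funext fun p => h1 p List.not_mem_nil
    subst this
    exact h3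
  · intro h
    exact ⟨ctx, fun p _ => rfl, fun p hp => absurd hp List.not_mem_nil, h⟩

lemma sat_Eq {G : CGS} {φ : Formula} {ctx : Ctx G} {π : ℕ → G.State} :
    sat G (Formula.Eq φ) ctx π ↔ ∃ π', IsOutcome G ctx (π 0) π' ∧ sat G φ ctx π' := by
  rw [Formula.Eq, sat_neg, sat_Aq]
  push_neg
  simp

/-- Transfer: an `A G ψ` formula holding at `s0` gives `ψ` on every path from every
reachable state. -/
lemma AGlob {G : CGS} {s0 : G.State} {ψ : Formula} (h : StateSat G s0 (Aq (glob ψ)))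
    {s : G.State} (hr : Reach G s0 s) {π : ℕ → G.State}
    (hπ : IsOutcome G (emptyCtx G) s π) : sat G ψ (emptyCtx G) π := by
  have key : ∀ s, Reach G s0 s → ∀ π, IsOutcome G (emptyCtx G) s π →
      ∃ π0 j, IsOutcome G (emptyCtx G) s0 π0 ∧ ∀ k, π0 (k + j) = π k := by
    intro s hr
    induction hr with
    | refl => exact fun π hπ => ⟨π, 0, hπ, fun k => rfl⟩
    | @tail b c hb hstep ih =>
        intro π hπ
        obtain ⟨mv, ht⟩ := hstep
        have hpre : IsOutcome G (emptyCtx G) b (pre b π) :=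
          pre_outcome hπ mv (fun p σ hp => by simp [emptyCtx] at hp) ht
        obtain ⟨π0, j, h0, hagree⟩ := ih (pre b π) hpre
        refine ⟨π0, j + 1, h0, fun k => ?_⟩
        have : k + (j + 1) = (k + 1) + j := by ring
        rw [this, hagree (k + 1)]
        rfl
  obtain ⟨π0, j, h0, hagree⟩ := key s hr π hπ
  have hsat := h π0 h0
  rw [sat_Aq] at hsat
  have := hsat π0 (by rw [h0.1]; exact h0)
  rw [sat_glob] at this
  have h2 := this j
  have : (fun n => π0 (n + j)) = π := funext fun k => hagree k
  rwa [this] at h2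

end Helpers
section Extraction

open Formula

lemma reach_tail {G : CGS} {a b c : G.State} (h : Reach G a b) (h2 : Step G b c) :
    Reach G a c := Relation.ReflTransGen.tail h h2

@[simp] lemma sat_fIff {G : CGS} {φ ψ : Formula} {ctx : Ctx G} {π : ℕ → G.State} :
    sat G (fIff φ ψ) ctx π ↔ (sat G φ ctx π ↔ sat G ψ ctx π) := by
  simp [fIff]; tauto

lemma sat_X3 {G : CGS} {φ : Formula} {ctx : Ctx G} {π : ℕ → G.State} :
    sat G (X3 φ) ctx π ↔ sat G φ ctx (fun n => π (n + 3)) := Iff.rfl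

lemma sat_EqNextAtom {G : CGS} {n : ℕ} {t : G.State} {π : ℕ → G.State} (hπ0 : π 0 = t) :
    sat G (Formula.Eq (.next (.atom n))) (emptyCtx G) π ↔
      ∃ z, Step G t z ∧ G.label z n := by
  rw [sat_Eq, hπ0]
  constructor
  · rintro ⟨π', h1, h2⟩
    exact ⟨π' 1, by have := (outcome_empty.1 h1).2 0; rwa [h1.1] at this, h2⟩
  · rintro ⟨z, ⟨mv, hmv⟩, hl⟩
    refine ⟨pre t (cpath G (emptyCtx G) z), ?_, ?_⟩
    · exact pre_outcome (cpath_outcome G _ z) mv (fun p σ hp => by simp [emptyCtx] at hp) hmv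
    · simpa [pre, cpath] using hl

lemma Dnext_extract {G : CGS} {p n : ℕ} {t : G.State} {π : ℕ → G.State} (hπ0 : π 0 = t)
    (h : sat G (Formula.D p (.next (.atom n))) (emptyCtx G) π) :
    ∃ a : G.Move, ∀ mv, mv p = a → G.label (G.trans t mv) n := by
  obtain ⟨ctx', hoff, hsome, hall⟩ := h
  obtain ⟨σ, hσ⟩ := hsome p (by simp [Formula.D])
  refine ⟨σ t, fun mv hmv => ?_⟩
  have hcond : ∀ q σ', ctx' q = some σ' → mv q = σ' t := by
    intro q σ' hq
    by_cases hqp : q = p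
    · subst hqp; rw [hσ] at hq; rw [hmv]; injection hq with h'; rw [h']
    · rw [hoff q (by simp [Formula.D, hqp])] at hq; simp [emptyCtx] at hq
  have hout : IsOutcome G ctx' t (pre t (cpath G ctx' (G.trans t mv))) :=
    pre_outcome (cpath_outcome G _ _) mv hcond rfl
  rw [hπ0] at hall
  have := hall _ hout
  simpa [pre, cpath] using this

lemma D_intro {G : CGS} {p : ℕ} {φ : Formula} {ctx : Ctx G} {π : ℕ → G.State}
    (ctx' : Ctx G) (hoff : ∀ q, q ≠ p → ctx' q = ctx q) (σ : G.State → G.Move)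
    (hσ : ctx' p = some σ)
    (h : ∀ π', IsOutcome G ctx' (π 0) π' → sat G φ ctx' π') :
    sat G (Formula.D p φ) ctx π :=
  ⟨ctx', fun q hq => hoff q (by simpa using hq),
    fun q hq => by rw [List.mem_singleton] at hq; subst hq; exact ⟨σ, hσ⟩, h⟩

lemma B_elim {G : CGS} {p : ℕ} {φ : Formula} {ctx : Ctx G} {π : ℕ → G.State}
    (h : sat G (Formula.B p φ) ctx π) {ctx' : Ctx G}
    (hoff : ∀ q, q ≠ p → ctx' q = ctx q) (hsome : ∃ σ, ctx' p = some σ) :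
    ∃ π', IsOutcome G ctx' (π 0) π' ∧ sat G φ ctx' π' := by
  by_contra hc
  push_neg at hc
  refine h ⟨ctx', fun q hq => hoff q (by simpa using hq),
    fun q hq => by rw [List.mem_singleton] at hq; subst hq; exact hsome,
    fun π' hπ' hs => hc π' hπ' hs⟩

/-- Strategy contexts used below. -/
def ctxOf1 (G : CGS) (σ1 : G.State → G.Move) : Ctx G :=
  fun q => if q = 1 then some σ1 else none

def ctxOf2 (G : CGS) (σ2 : G.State → G.Move) : Ctx G :=
  fun q => if q = 2 then some σ2 else none

def ctxOf12 (G : CGS) (σ1 σ2 : G.State → G.Move) : Ctx G :=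
  fun q => if q = 2 then some σ2 else if q = 1 then some σ1 else none

lemma outcome2_spec {G : CGS} {σ2 : G.State → G.Move} {s : G.State} {π : ℕ → G.State}
    (h : IsOutcome G (ctxOf2 G σ2) s π) (i : ℕ) :
    ∃ mv, mv 2 = σ2 (π i) ∧ π (i + 1) = G.trans (π i) mv := by
  obtain ⟨mv, h1, h2⟩ := h.2 i
  exact ⟨mv, h1 2 σ2 (by simp [ctxOf2]), h2⟩

lemma outcome12_spec {G : CGS} {σ1 σ2 : G.State → G.Move} {s : G.State} {π : ℕ → G.State}
    (h : IsOutcome G (ctxOf12 G σ1 σ2) s π) (i : ℕ) :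
    ∃ mv, mv 1 = σ1 (π i) ∧ mv 2 = σ2 (π i) ∧ π (i + 1) = G.trans (π i) mv := by
  obtain ⟨mv, h1, h2⟩ := h.2 i
  exact ⟨mv, h1 1 σ1 (by simp [ctxOf12]), h1 2 σ2 (by simp [ctxOf12]), h2⟩

variable {G : CGS} {s0 : G.State} {ts : TileSystem}

/-- From φ1 (first conjunct): `m` excludes `c`. -/
lemma E1 (h1 : StateSat G s0 (phi1 ts)) {t : G.State} (hr : Reach G s0 t)
    (hm : G.label t 0) : ¬ G.label t 1 := by
  have hs : StateSat G s0 (Aq (glob (bigOr ((APprime ts).map fun p =>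
      .conj (.atom p) (bigAnd (((APprime ts).filter (· ≠ p)).map fun q => .neg (.atom q))))))) := by
    intro π hπ
    have := h1 π hπ
    rw [show phi1 ts = bigAnd [_, _, _, _] from rfl, sat_bigAnd] at this
    exact this _ (by simp)
  have hsat := AGlob hs hr (cpath_outcome G _ t)
  rw [sat_bigOr] at hsat
  obtain ⟨φ, hφmem, hφ⟩ := hsat
  rw [List.mem_map] at hφmem
  obtain ⟨p, hpmem, rfl⟩ := hφmem
  rw [sat_conj, sat_atom, sat_bigAnd] at hφ
  have hp0 : (cpath G (emptyCtx G) t) 0 = t := rfl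
  rw [hp0] at hφ
  by_cases hp : p = 0
  · subst hp
    intro hc
    have h1mem : (1 : ℕ) ∈ (APprime ts).filter (· ≠ 0) := by
      simp [APprime]
    have := hφ.2 (.neg (.atom 1)) (List.mem_map_of_mem h1mem)
    rw [sat_neg, sat_atom, hp0] at this
    exact this hc
  · exfalso
    have h0mem : (0 : ℕ) ∈ (APprime ts).filter (· ≠ p) := by
      simp [APprime, Ne.symm hp]
    have := hφ.2 (.neg (.atom 0)) (List.mem_map_of_mem h0mem)
    rw [sat_neg, sat_atom, hp0] at this
    exact this hm

end Extraction
section Extraction2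

open Formula

variable {G : CGS} {s0 : G.State} {ts : TileSystem}

/-- From φ1 (4th conjunct, 1st item): `□` excludes `○`. -/
lemma E2 (h1 : StateSat G s0 (phi1 ts)) {t : G.State} (hr : Reach G s0 t)
    (hsq : G.label t 6) : ¬ G.label t 7 := by
  have hs : StateSat G s0 (Aq (glob (bigAnd [
      fIff psq (.neg pci),
      fImp psq (bigAnd ((APall ts).map fun p =>
        fIff (Formula.Eq (.next (.atom p))) (Formula.D 1 (.next (.atom p))))),
      fImp pci (bigAnd ((APall ts).map fun p =>
        fIff (Formula.Eq (.next (.atom p))) (Formula.D 2 (.next (.atom p)))))]))) := by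
    intro π hπ
    have := h1 π hπ
    rw [show phi1 ts = bigAnd [_, _, _, _] from rfl, sat_bigAnd] at this
    exact this _ (by simp)
  have hsat := AGlob hs hr (cpath_outcome G _ t)
  rw [sat_bigAnd] at hsat
  have h := hsat _ (by simp : fIff psq (.neg pci) ∈ _)
  rw [sat_fIff] at h
  exact h.1 hsq

/-- From φ1 (4th conjunct, 3rd item): at a `○`-state, one-step reachability of an
atom gives a Player-2 strategy enforcing it. -/
lemma E3 (h1 : StateSat G s0 (phi1 ts)) {t : G.State} (hr : Reach G s0 t)
    (hci : G.label t 7) {n : ℕ} (hn : n ∈ APall ts) {z : G.State}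
    (hz : Step G t z) (hlz : G.label z n) :
    ∃ a : G.Move, ∀ mv, mv 2 = a → G.label (G.trans t mv) n := by
  have hs : StateSat G s0 (Aq (glob (bigAnd [
      fIff psq (.neg pci),
      fImp psq (bigAnd ((APall ts).map fun p =>
        fIff (Formula.Eq (.next (.atom p))) (Formula.D 1 (.next (.atom p))))),
      fImp pci (bigAnd ((APall ts).map fun p =>
        fIff (Formula.Eq (.next (.atom p))) (Formula.D 2 (.next (.atom p)))))]))) := by
    intro π hπ
    have := h1 π hπ
    rw [show phi1 ts = bigAnd [_, _, _, _] from rfl, sat_bigAnd] at this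
    exact this _ (by simp)
  have hsat := AGlob hs hr (cpath_outcome G _ t)
  rw [sat_bigAnd] at hsat
  have h := hsat _ (by simp : fImp pci (bigAnd ((APall ts).map fun p =>
        fIff (Formula.Eq (.next (.atom p))) (Formula.D 2 (.next (.atom p))))) ∈ _)
  rw [sat_fImp] at h
  have h2 := h hci
  rw [sat_bigAnd] at h2
  have h3 := h2 _ (List.mem_map_of_mem hn)
  rw [sat_fIff] at h3
  have h4 := h3.1 ((sat_EqNextAtom rfl).2 ⟨z, hz, hlz⟩)
  exact Dnext_extract rfl h4

/-- From φ2 (1st conjunct): no reachable `m`-state carries both colours. -/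
lemma E4 (h2 : StateSat G s0 (phi2 ts)) {t : G.State} (hr : Reach G s0 t)
    (hm : G.label t 0) (ha : G.label t 4) (hb : G.label t 5) : False := by
  have hs : StateSat G s0 (Aq (glob (fImp pm (fOr (bigAnd [psq, .neg pal, .neg pbe])
      (.conj pci (.neg (.conj pal pbe))))))) := by
    intro π hπ
    have := h2 π hπ
    rw [show phi2 ts = bigAnd [_, _, _] from rfl, sat_bigAnd] at this
    exact this _ (by simp)
  have hsat := AGlob hs hr (cpath_outcome G _ t)
  rw [sat_fImp] at hsat
  have h := hsat hm
  rw [sat_fOr] at h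
  rcases h with h | h
  · rw [sat_bigAnd] at h
    have := h (.neg pal) (by simp)
    exact this ha
  · exact h.2 ⟨ha, hb⟩

/-- From φ2 (2nd conjunct): `v₁ ∨ v₂` implies `m ∧ □`. -/
lemma E5a (h2 : StateSat G s0 (phi2 ts)) {t : G.State} (hr : Reach G s0 t)
    (hv : G.label t 2 ∨ G.label t 3) : G.label t 0 ∧ G.label t 6 := by
  have hs : StateSat G s0 (Aq (glob (.conj (fImp (.conj pm psq) (fIff pv1 (.neg pv2)))
      (fImp (fOr pv1 pv2) (.conj pm psq))))) := by
    intro π hπ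
    have := h2 π hπ
    rw [show phi2 ts = bigAnd [_, _, _] from rfl, sat_bigAnd] at this
    exact this _ (by simp)
  have hsat := AGlob hs hr (cpath_outcome G _ t)
  rw [sat_conj, sat_fImp, sat_fImp] at hsat
  exact hsat.2 (sat_fOr.2 (by exact hv))

/-- From φ2 (2nd conjunct): at a reachable `m ∧ □` state, `v₁ ⇔ ¬v₂`. -/
lemma E5b (h2 : StateSat G s0 (phi2 ts)) {t : G.State} (hr : Reach G s0 t)
    (hm : G.label t 0) (hsq : G.label t 6) : G.label t 2 ↔ ¬ G.label t 3 := by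
  have hs : StateSat G s0 (Aq (glob (.conj (fImp (.conj pm psq) (fIff pv1 (.neg pv2)))
      (fImp (fOr pv1 pv2) (.conj pm psq))))) := by
    intro π hπ
    have := h2 π hπ
    rw [show phi2 ts = bigAnd [_, _, _] from rfl, sat_bigAnd] at this
    exact this _ (by simp)
  have hsat := AGlob hs hr (cpath_outcome G _ t)
  rw [sat_conj, sat_fImp] at hsat
  have := hsat.1 ⟨hm, hsq⟩
  rwa [sat_fIff] at this

/-- From φ2 (3rd conjunct, 1st item): shape of the cell gadget. -/
lemma E6a (h2 : StateSat G s0 (phi2 ts)) {t : G.State} (hr : Reach G s0 t)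
    (hm : G.label t 0) (hsq : G.label t 6) {x : G.State} (hx : Step G t x) :
    G.label x 0 ∧ G.label x 7 ∧ (G.label x 4 ∨ G.label x 5) ∧
      ∀ y, Step G x y →
        G.label y 0 ∧ G.label y 7 ∧ ¬ G.label y 4 ∧ ¬ G.label y 5 := by
  have hs : StateSat G s0 (Aq (glob (fImp (.conj pm psq) (bigAnd [
      Aq (.next (bigAnd [pm, pci, fOr pal pbe,
        Aq (.next (bigAnd [pm, pci, .neg pal, .neg pbe]))])),
      Formula.D 1 (.next pal),
      Formula.D 1 (.next pbe)])))) := by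
    intro π hπ
    have := h2 π hπ
    rw [show phi2 ts = bigAnd [_, _, _] from rfl, sat_bigAnd] at this
    exact this _ (by simp)
  have hsat := AGlob hs hr (cpath_outcome G _ t)
  rw [sat_fImp] at hsat
  have h := hsat ⟨hm, hsq⟩
  rw [sat_bigAnd] at h
  have h1 := h _ (by simp : Aq (.next (bigAnd [pm, pci, fOr pal pbe,
        Aq (.next (bigAnd [pm, pci, .neg pal, .neg pbe]))])) ∈ _)
  rw [sat_Aq] at h1
  obtain ⟨mvx, hmvx⟩ := hx
  have hout : IsOutcome G (emptyCtx G) t (pre t (cpath G (emptyCtx G) x)) :=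
    pre_outcome (cpath_outcome G _ x) mvx (fun p σ hp => by simp [emptyCtx] at hp) hmvx
  have h2' := h1 _ hout
  rw [sat_next, sat_bigAnd] at h2'
  have hxm := h2' pm (by simp)
  have hxci := h2' pci (by simp)
  have hxcol := h2' (fOr pal pbe) (by simp)
  have hxAq := h2' (Aq (.next (bigAnd [pm, pci, .neg pal, .neg pbe]))) (by simp)
  rw [sat_fOr] at hxcol
  refine ⟨hxm, hxci, hxcol, fun y hy => ?_⟩
  rw [sat_Aq] at hxAq
  obtain ⟨mvy, hmvy⟩ := hy
  have houty : IsOutcome G (emptyCtx G) x (pre x (cpath G (emptyCtx G) y)) :=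
    pre_outcome (cpath_outcome G _ y) mvy (fun p σ hp => by simp [emptyCtx] at hp) hmvy
  have h3' := hxAq _ houty
  rw [sat_next, sat_bigAnd] at h3'
  exact ⟨h3' pm (by simp), h3' pci (by simp),
    h3' (.neg pal) (by simp), h3' (.neg pbe) (by simp)⟩

/-- From φ2 (3rd conjunct): Player-1 colour moves at a reachable `m ∧ □` state. -/
lemma E6b (h2 : StateSat G s0 (phi2 ts)) {t : G.State} (hr : Reach G s0 t)
    (hm : G.label t 0) (hsq : G.label t 6) :
    (∃ a : G.Move, ∀ mv, mv 1 = a → G.label (G.trans t mv) 4) ∧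
    (∃ a : G.Move, ∀ mv, mv 1 = a → G.label (G.trans t mv) 5) := by
  have hs : StateSat G s0 (Aq (glob (fImp (.conj pm psq) (bigAnd [
      Aq (.next (bigAnd [pm, pci, fOr pal pbe,
        Aq (.next (bigAnd [pm, pci, .neg pal, .neg pbe]))])),
      Formula.D 1 (.next pal),
      Formula.D 1 (.next pbe)])))) := by
    intro π hπ
    have := h2 π hπ
    rw [show phi2 ts = bigAnd [_, _, _] from rfl, sat_bigAnd] at this
    exact this _ (by simp)
  have hsat := AGlob hs hr (cpath_outcome G _ t)
  rw [sat_fImp] at hsat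
  have h := hsat ⟨hm, hsq⟩
  rw [sat_bigAnd] at h
  constructor
  · exact Dnext_extract rfl (h _ (by simp : Formula.D 1 (.next pal) ∈ _))
  · exact Dnext_extract rfl (h _ (by simp : Formula.D 1 (.next pbe) ∈ _))

/-- From φ3 (2nd conjunct): every reachable exit state has `v₁`- and `v₂`-successors. -/
lemma E7 (h3 : StateSat G s0 (phi3 ts)) {t : G.State} (hr : Reach G s0 t)
    (hm : G.label t 0) (hci : G.label t 7) (hna : ¬ G.label t 4) (hnb : ¬ G.label t 5) :
    (∃ z, Step G t z ∧ G.label z 2) ∧ (∃ z, Step G t z ∧ G.label z 3) := by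
  have hs : StateSat G s0 (Aq (glob (fImp (bigAnd [pm, pci, .neg pal, .neg pbe])
      (bigAnd [Formula.Eq (.next pc), Formula.Eq (.next pv1), Formula.Eq (.next pv2),
        Aq (.next (bigOr [pc, pv1, pv2]))])))) := by
    intro π hπ
    have := h3 π hπ
    rw [show phi3 ts = bigAnd [_, _] from rfl, sat_bigAnd] at this
    exact this _ (by simp)
  have hsat := AGlob hs hr (cpath_outcome G _ t)
  rw [sat_fImp] at hsat
  have hprem : sat G (bigAnd [pm, pci, .neg pal, .neg pbe]) (emptyCtx G)
      (cpath G (emptyCtx G) t) := by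
    rw [sat_bigAnd]
    intro φ hφ
    simp only [List.mem_cons, List.not_mem_nil, or_false] at hφ
    rcases hφ with rfl | rfl | rfl | rfl
    · exact hm
    · exact hci
    · exact hna
    · exact hnb
  have h := hsat hprem
  rw [sat_bigAnd] at h
  constructor
  · exact (sat_EqNextAtom rfl).1 (h _ (by simp : Formula.Eq (.next pv1) ∈ _))
  · exact (sat_EqNextAtom rfl).1 (h _ (by simp : Formula.Eq (.next pv2) ∈ _))

/-- From φ5: the single-exit dichotomy. -/
lemma E8 (h5 : StateSat G s0 phi5) {t : G.State} (hr : Reach G s0 t)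
    (hm : G.label t 0) (hsq : G.label t 6) (σ2 : G.State → G.Move) :
    (∀ π, IsOutcome G (ctxOf2 G σ2) t π → G.label (π 3) 1 ∨ G.label (π 3) 2) ∨
    (∀ π, IsOutcome G (ctxOf2 G σ2) t π → G.label (π 3) 1 ∨ G.label (π 3) 3) := by
  have h5' : StateSat G s0 (Aq (glob (fImp (.conj pm psq)
      (Formula.B 2 (fOr (Aq (X3 (fOr pc pv1))) (Aq (X3 (fOr pc pv2)))))))) := h5
  have hsat := AGlob h5' hr (cpath_outcome G _ t)
  rw [sat_fImp] at hsat
  have hB := hsat ⟨hm, hsq⟩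
  obtain ⟨π', hout', hsat'⟩ := B_elim hB (ctx' := ctxOf2 G σ2)
    (fun q hq => by simp [ctxOf2, emptyCtx, hq]) ⟨σ2, by simp [ctxOf2]⟩
  rw [sat_fOr] at hsat'
  rcases hsat' with h | h
  · left
    intro π hπ
    have := sat_Aq.1 h π (by rw [hout'.1]; exact hπ)
    rw [sat_X3, sat_fOr] at this
    exact this
  · right
    intro π hπ
    have := sat_Aq.1 h π (by rw [hout'.1]; exact hπ)
    rw [sat_X3, sat_fOr] at this
    exact this

/-- From φ6: the main two-successor-cells constraint, in semantic form. -/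
lemma E9 (h6 : StateSat G s0 phi6) {t : G.State} (hr : Reach G s0 t)
    (hm : G.label t 0) (hsq : G.label t 6) (σ1 : G.State → G.Move)
    (hp1 : ∃ σ2, ∀ π, IsOutcome G (ctxOf12 G σ1 σ2) t π →
      G.label (π 3) 2 ∧ G.label (π 4) 4)
    (hp2 : ∃ σ2, ∀ π, IsOutcome G (ctxOf12 G σ1 σ2) t π →
      G.label (π 3) 3 ∧ G.label (π 4) 4) :
    ∀ σ2 π, IsOutcome G (ctxOf12 G σ1 σ2) t π → G.label (π 4) 4 := by
  have h6' : StateSat G s0 (Aq (glob (fImp (.conj pm psq)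
      (Formula.B 1 (fImp
        (.conj (Formula.D 2 (X3 (.conj pv1 (.next pal))))
          (Formula.D 2 (X3 (.conj pv2 (.next pal)))))
        (Formula.B 2 (Aq (X3 (.next pal))))))))) := h6
  have hsat := AGlob h6' hr (cpath_outcome G _ t)
  rw [sat_fImp] at hsat
  have hB1 := hsat ⟨hm, hsq⟩
  intro σ2 π hπ
  obtain ⟨σ2a, ha⟩ := hp1
  obtain ⟨σ2b, hb⟩ := hp2
  obtain ⟨π', hout', hstep'⟩ := B_elim hB1 (ctx' := ctxOf1 G σ1)
    (fun q hq => by simp [ctxOf1, emptyCtx, hq]) ⟨σ1, by simp [ctxOf1]⟩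
  rw [sat_fImp] at hstep'
  have hoff12 : ∀ σ2' q, q ≠ 2 → ctxOf12 G σ1 σ2' q = ctxOf1 G σ1 q := by
    intro σ2' q hq
    simp [ctxOf12, ctxOf1, hq]
  have hprem : sat G (.conj (Formula.D 2 (X3 (.conj pv1 (.next pal))))
      (Formula.D 2 (X3 (.conj pv2 (.next pal))))) (ctxOf1 G σ1) π' := by
    constructor
    · refine D_intro (ctxOf12 G σ1 σ2a) (hoff12 σ2a) σ2a (by simp [ctxOf12]) ?_
      intro π'' hπ''
      have := ha π'' (by rw [hout'.1] at hπ''; exact hπ'')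
      exact this
    · refine D_intro (ctxOf12 G σ1 σ2b) (hoff12 σ2b) σ2b (by simp [ctxOf12]) ?_
      intro π'' hπ''
      have := hb π'' (by rw [hout'.1] at hπ''; exact hπ'')
      exact this
  have hB2 := hstep' hprem
  obtain ⟨π'', hout'', hsatAq⟩ := B_elim hB2 (ctx' := ctxOf12 G σ1 σ2)
    (hoff12 σ2) ⟨σ2, by simp [ctxOf12]⟩
  have := sat_Aq.1 hsatAq π (by rw [hout''.1, hout'.1]; exact hπ)
  exact this

end Extraction2
section Structure

open Formula

variable {G : CGS} {s0 : G.State} {ts : TileSystem}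

/-- At a reachable `m ∧ □` state, the controlling player is not Player 2. -/
lemma ctrl_s_not2 (h2 : StateSat G s0 (phi2 ts)) (hTB : TurnBased G)
    {s : G.State} (hr : Reach G s0 s) (hm : G.label s 0) (hsq : G.label s 6) :
    ∃ p, Controls G p s ∧ p ≠ 2 := by
  obtain ⟨p, hc⟩ := hTB s
  by_cases hp : p = 2
  · exfalso
    subst hp
    obtain ⟨⟨aα, haα⟩, ⟨aβ, haβ⟩⟩ := E6b h2 hr hm hsq
    have h4 : G.label (G.trans s (fun q => if q = 1 then aα else dmove G)) 4 :=
      haα _ (by simp)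
    have h5 : G.label (G.trans s (fun q => if q = 1 then aβ else dmove G)) 5 :=
      haβ _ (by simp)
    have heq : G.trans s (fun q => if q = 1 then aα else dmove G) =
        G.trans s (fun q => if q = 1 then aβ else dmove G) := hc _ _ (by simp)
    have hstep : Step G s (G.trans s (fun q => if q = 1 then aα else dmove G)) := ⟨_, rfl⟩
    have hlab := E6a h2 hr hm hsq hstep
    exact E4 h2 (reach_tail hr hstep) hlab.1 h4 (heq ▸ h5)
  · exact ⟨p, hc, hp⟩

/-- Two-step successors of a reachable `m ∧ □` state through distinct middle states
coincide (from φ5). -/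
lemma cross (h1 : StateSat G s0 (phi1 ts)) (h2 : StateSat G s0 (phi2 ts))
    (h3 : StateSat G s0 (phi3 ts)) (h5 : StateSat G s0 phi5) (hTB : TurnBased G)
    {s : G.State} (hr : Reach G s0 s) (hm : G.label s 0) (hsq : G.label s 6)
    {x w x' w' : G.State} (hsx : Step G s x) (hxw : Step G x w)
    (hsx' : Step G s x') (hx'w' : Step G x' w') (hne : x ≠ x') : w = w' := by
  classical
  by_contra hww
  have hxlab := E6a h2 hr hm hsq hsx
  have hx'lab := E6a h2 hr hm hsq hsx'
  have hwlab := hxlab.2.2.2 w hxw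
  have hw'lab := hx'lab.2.2.2 w' hx'w'
  have rx := reach_tail hr hsx
  have rx' := reach_tail hr hsx'
  have rw0 := reach_tail rx hxw
  have rw' := reach_tail rx' hx'w'
  obtain ⟨⟨z1, hz1s, hz1l⟩, _⟩ := E7 h3 rw0 hwlab.1 hwlab.2.1 hwlab.2.2.1 hwlab.2.2.2
  obtain ⟨_, ⟨z2, hz2s, hz2l⟩⟩ := E7 h3 rw' hw'lab.1 hw'lab.2.1 hw'lab.2.2.1 hw'lab.2.2.2
  obtain ⟨mv_x, hmv_x⟩ := hsx
  obtain ⟨mv_x', hmv_x'⟩ := hsx'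
  obtain ⟨mv_w, hmv_w⟩ := hxw
  obtain ⟨mv_w', hmv_w'⟩ := hx'w'
  obtain ⟨mv_z1, hmv_z1⟩ := hz1s
  obtain ⟨mv_z2, hmv_z2⟩ := hz2s
  -- distinctness needed for the strategy definition
  have hwx : w ≠ x := by
    intro h; rcases hxlab.2.2.1 with h4 | h5
    · exact hwlab.2.2.1 (h ▸ h4)
    · exact hwlab.2.2.2 (h ▸ h5)
  have hwx' : w ≠ x' := by
    intro h; rcases hx'lab.2.2.1 with h4 | h5
    · exact hwlab.2.2.1 (h ▸ h4)
    · exact hwlab.2.2.2 (h ▸ h5)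
  have hw'x : w' ≠ x := by
    intro h; rcases hxlab.2.2.1 with h4 | h5
    · exact hw'lab.2.2.1 (h ▸ h4)
    · exact hw'lab.2.2.2 (h ▸ h5)
  have hw'x' : w' ≠ x' := by
    intro h; rcases hx'lab.2.2.1 with h4 | h5
    · exact hw'lab.2.2.1 (h ▸ h4)
    · exact hw'lab.2.2.2 (h ▸ h5)
  have hsnotci : ¬ G.label s 7 := E2 h1 hr hsq
  have hsx0 : s ≠ x := fun h => hsnotci (h ▸ hxlab.2.1)
  have hsx0' : s ≠ x' := fun h => hsnotci (h ▸ hx'lab.2.1)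
  have hsw : s ≠ w := fun h => hsnotci (h ▸ hwlab.2.1)
  have hsw' : s ≠ w' := fun h => hsnotci (h ▸ hw'lab.2.1)
  set σ2 : G.State → G.Move := fun v =>
    if v = x then mv_w 2 else if v = x' then mv_w' 2
    else if v = w then mv_z1 2 else if v = w' then mv_z2 2 else dmove G with hσ2
  have hσ2x : σ2 x = mv_w 2 := by simp [hσ2]
  have hσ2x' : σ2 x' = mv_w' 2 := by simp [hσ2, Ne.symm hne]
  have hσ2w : σ2 w = mv_z1 2 := by simp [hσ2, hwx, hwx']
  have hσ2w' : σ2 w' = mv_z2 2 := by simp [hσ2, hw'x, hw'x', Ne.symm hww]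
  obtain ⟨p, hcp, hp2⟩ := ctrl_s_not2 h2 hTB hr hm hsq
  have hcond2 : ∀ (u : G.State) (mv : ℕ → G.Move), mv 2 = σ2 u →
      (∀ q σ, ctxOf2 G σ2 q = some σ → mv q = σ u) := by
    intro u mv hmv q σ hq
    by_cases hq2 : q = 2
    · subst hq2
      simp only [ctxOf2, if_pos rfl] at hq
      injection hq with h'
      rw [hmv, h']
    · simp [ctxOf2, hq2] at hq
  -- outcome A : s → x → w → z1 → ⋯
  have houtA : IsOutcome G (ctxOf2 G σ2) s
      (pre s (pre x (pre w (cpath G (ctxOf2 G σ2) z1)))) := by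
    refine pre_outcome (pre_outcome (pre_outcome (cpath_outcome G _ z1)
      mv_z1 (hcond2 w mv_z1 hσ2w.symm) hmv_z1)
      mv_w (hcond2 x mv_w hσ2x.symm) hmv_w)
      (Function.update mv_x 2 (σ2 s)) (hcond2 s _ (Function.update_self _ _ _)) ?_
    rw [hcp _ mv_x (Function.update_of_ne hp2 _ _)]
    exact hmv_x
  -- outcome B : s → x' → w' → z2 → ⋯
  have houtB : IsOutcome G (ctxOf2 G σ2) s
      (pre s (pre x' (pre w' (cpath G (ctxOf2 G σ2) z2)))) := by
    refine pre_outcome (pre_outcome (pre_outcome (cpath_outcome G _ z2)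
      mv_z2 (hcond2 w' mv_z2 hσ2w'.symm) hmv_z2)
      mv_w' (hcond2 x' mv_w' hσ2x'.symm) hmv_w')
      (Function.update mv_x' 2 (σ2 s)) (hcond2 s _ (Function.update_self _ _ _)) ?_
    rw [hcp _ mv_x' (Function.update_of_ne hp2 _ _)]
    exact hmv_x'
  -- facts about z1 and z2
  have rz1 := reach_tail rw0 ⟨mv_z1, hmv_z1⟩
  have rz2 := reach_tail rw' ⟨mv_z2, hmv_z2⟩
  have hz1m := E5a h2 rz1 (Or.inl hz1l)
  have hz2m := E5a h2 rz2 (Or.inr hz2l)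
  have hz1nc : ¬ G.label z1 1 := E1 h1 rz1 hz1m.1
  have hz2nc : ¬ G.label z2 1 := E1 h1 rz2 hz2m.1
  have hz1n3 : ¬ G.label z1 3 := (E5b h2 rz1 hz1m.1 hz1m.2).1 hz1l
  have hz2n2 : ¬ G.label z2 2 := fun hl => (E5b h2 rz2 hz2m.1 hz2m.2).1 hl hz2l
  rcases E8 h5 hr hm hsq σ2 with hAll | hAll
  · have := hAll _ houtB
    have h3eq : (pre s (pre x' (pre w' (cpath G (ctxOf2 G σ2) z2)))) 3 = z2 := rfl
    rw [h3eq] at this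
    rcases this with h | h
    · exact hz2nc h
    · exact hz2n2 h
  · have := hAll _ houtA
    have h3eq : (pre s (pre x (pre w (cpath G (ctxOf2 G σ2) z1)))) 3 = z1 := rfl
    rw [h3eq] at this
    rcases this with h | h
    · exact hz1nc h
    · exact hz1n3 h

/-- All two-step successors of a reachable `m ∧ □` state coincide. -/
lemma two_step_unique (h1 : StateSat G s0 (phi1 ts)) (h2 : StateSat G s0 (phi2 ts))
    (h3 : StateSat G s0 (phi3 ts)) (h5 : StateSat G s0 phi5) (hTB : TurnBased G)
    {s : G.State} (hr : Reach G s0 s) (hm : G.label s 0) (hsq : G.label s 6)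
    {x w x' w' : G.State} (hsx : Step G s x) (hxw : Step G x w)
    (hsx' : Step G s x') (hx'w' : Step G x' w') : w = w' := by
  by_cases hne : x = x'
  · subst hne
    by_contra hww
    have hall : ∀ x2, Step G s x2 → x2 = x := by
      intro x2 hx2
      by_contra hne2
      have hw2 : Step G x2 (G.trans x2 (fun _ => dmove G)) := ⟨_, rfl⟩
      have e1 := cross h1 h2 h3 h5 hTB hr hm hsq hx2 hw2 hsx hxw hne2
      have e2 := cross h1 h2 h3 h5 hTB hr hm hsq hx2 hw2 hsx hx'w' hne2
      exact hww (e1 ▸ e2)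
    obtain ⟨⟨aα, haα⟩, ⟨aβ, haβ⟩⟩ := E6b h2 hr hm hsq
    have hta : G.trans s (fun q => if q = 1 then aα else dmove G) = x :=
      hall _ ⟨_, rfl⟩
    have htb : G.trans s (fun q => if q = 1 then aβ else dmove G) = x :=
      hall _ ⟨_, rfl⟩
    have h4 : G.label x 4 := hta ▸ haα _ (by simp)
    have h5' : G.label x 5 := htb ▸ haβ _ (by simp)
    exact E4 h2 (reach_tail hr hsx) (E6a h2 hr hm hsq hsx).1 h4 h5'
  · exact cross h1 h2 h3 h5 hTB hr hm hsq hsx hxw hsx' hx'w' hne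

/-- Player 2 controls every reachable exit state. -/
lemma ctrl2_exit (h1 : StateSat G s0 (phi1 ts)) (h2 : StateSat G s0 (phi2 ts))
    (h3 : StateSat G s0 (phi3 ts)) (hTB : TurnBased G)
    {y : G.State} (hry : Reach G s0 y) (hm0 : G.label y 0) (hci : G.label y 7)
    (hna : ¬ G.label y 4) (hnb : ¬ G.label y 5) : Controls G 2 y := by
  obtain ⟨⟨z1, hz1, hl1⟩, ⟨z2, hz2, hl2⟩⟩ := E7 h3 hry hm0 hci hna hnb
  obtain ⟨p, hcp⟩ := hTB y
  by_cases hp : p = 2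
  · subst hp; exact hcp
  · exfalso
    obtain ⟨a1, ha1⟩ := E3 h1 hry hci (n := 2) (by simp [APall]) hz1 hl1
    obtain ⟨a2, ha2⟩ := E3 h1 hry hci (n := 3) (by simp [APall]) hz2 hl2
    have hall2 : ∀ ν, G.label (G.trans y ν) 2 := by
      intro ν
      have := ha1 (Function.update ν 2 a1) (Function.update_self _ _ _)
      rwa [hcp _ ν (Function.update_of_ne hp _ _)] at this
    have hall3 : ∀ ν, G.label (G.trans y ν) 3 := by
      intro ν
      have := ha2 (Function.update ν 2 a2) (Function.update_self _ _ _)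
      rwa [hcp _ ν (Function.update_of_ne hp _ _)] at this
    obtain ⟨mv1, hmv1⟩ := hz1
    have rz := reach_tail hry ⟨mv1, rfl⟩
    have hm' := E5a h2 rz (Or.inl (hall2 mv1))
    exact (E5b h2 rz hm'.1 hm'.2).1 (hall2 mv1) (hall3 mv1)

end Structure
/-- **Theorem.** In any turn-based game structure satisfying formulas (1)–(5) of the
reduction, formula (6), `AG[(m ∧ □) ⇒ [1]((⟨2⟩X³(v₁ ∧ Xα) ∧ ⟨2⟩X³(v₂ ∧ Xα)) ⇒ [2]⟨∅⟩X³Xα)]`,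
forces every cell of the grid to have exactly two successor cells: one whose entry
state is labelled `v₁` and one whose entry state is labelled `v₂` (entry states of
successor cells are the states reached in three steps that carry `v₁` or `v₂`). -/
theorem formula6_forces_exactly_two_successor_cells (ts : TileSystem) (G : CGS)
    (s0 : G.State) (hTB : TurnBased G)
    (h1 : StateSat G s0 (phi1 ts)) (h2 : StateSat G s0 (phi2 ts))
    (h3 : StateSat G s0 (phi3 ts)) (h4 : StateSat G s0 (phi4 ts))
    (h5 : StateSat G s0 phi5) (h6 : StateSat G s0 phi6) :
    ∀ s, Reach G s0 s → G.label s 0 → G.label s 6 →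
      ∃ u1 u2 : G.State, Step3 G s u1 ∧ Step3 G s u2 ∧
        G.label u1 2 ∧ G.label u2 3 ∧
        ∀ u, Step3 G s u → (G.label u 2 ∨ G.label u 3) → u = u1 ∨ u = u2 := by
  classical
  intro s hr hm hsq
  obtain ⟨x0, hsx0⟩ : ∃ x, Step G s x := ⟨_, ⟨fun _ => dmove G, rfl⟩⟩
  obtain ⟨ys, hx0y⟩ : ∃ y, Step G x0 y := ⟨_, ⟨fun _ => dmove G, rfl⟩⟩
  have hx0lab := E6a h2 hr hm hsq hsx0
  have hyslab := hx0lab.2.2.2 ys hx0y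
  have rx0 := reach_tail hr hsx0
  have rys := reach_tail rx0 hx0y
  have hctrl2 : Controls G 2 ys :=
    ctrl2_exit h1 h2 h3 hTB rys hyslab.1 hyslab.2.1 hyslab.2.2.1 hyslab.2.2.2
  obtain ⟨⟨u1, hyu1, hu1l⟩, ⟨u2, hyu2, hu2l⟩⟩ :=
    E7 h3 rys hyslab.1 hyslab.2.1 hyslab.2.2.1 hyslab.2.2.2
  have huniq : ∀ {x w x' w' : G.State}, Step G s x → Step G x w → Step G s x' →
      Step G x' w' → w = w' :=
    fun hsx hxw hsx' hx'w' => two_step_unique h1 h2 h3 h5 hTB hr hm hsq hsx hxw hsx' hx'w'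
  -- total colouring moves for Player 1
  have hAl : ∀ v : G.State, ∃ a : G.Move,
      (Reach G s0 v ∧ G.label v 0 ∧ G.label v 6) →
        ∀ mv, mv 1 = a → G.label (G.trans v mv) 4 := by
    intro v
    by_cases h : Reach G s0 v ∧ G.label v 0 ∧ G.label v 6
    · obtain ⟨⟨a, ha⟩, -⟩ := E6b h2 h.1 h.2.1 h.2.2
      exact ⟨a, fun _ => ha⟩
    · exact ⟨dmove G, fun hc => absurd hc h⟩
  have hBe : ∀ v : G.State, ∃ a : G.Move,
      (Reach G s0 v ∧ G.label v 0 ∧ G.label v 6) →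
        ∀ mv, mv 1 = a → G.label (G.trans v mv) 5 := by
    intro v
    by_cases h : Reach G s0 v ∧ G.label v 0 ∧ G.label v 6
    · obtain ⟨-, ⟨a, ha⟩⟩ := E6b h2 h.1 h.2.1 h.2.2
      exact ⟨a, fun _ => ha⟩
    · exact ⟨dmove G, fun hc => absurd hc h⟩
  choose Aal hAal using hAl
  choose Abe hAbe using hBe
  -- key claim: for each `ℓ ∈ {v₁, v₂}` the `ℓ`-labelled successors of the exit
  -- state coincide (via formula (6))
  have vkey : ∀ a b : G.State, Step G ys a → Step G ys b → ∀ ℓ ℓ' : ℕ,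
      ((ℓ = 2 ∧ ℓ' = 3) ∨ (ℓ = 3 ∧ ℓ' = 2)) → G.label a ℓ → G.label b ℓ → a = b := by
    intro a b hya hyb ℓ ℓ' hll hla hlb
    by_contra hab
    have hℓ23 : ℓ = 2 ∨ ℓ = 3 := by
      rcases hll with ⟨h, -⟩ | ⟨h, -⟩
      · exact Or.inl h
      · exact Or.inr h
    set σ1 : G.State → G.Move := fun v => if v = b then Abe v else Aal v with hσ1
    have hstepf : ∀ (σ2 : G.State → G.Move) (π : ℕ → G.State),
        IsOutcome G (ctxOf12 G σ1 σ2) s π → Step G s (π 1) ∧ π 2 = ys := by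
      intro σ2 π hπ
      obtain ⟨mv0, -, -, he1⟩ := outcome12_spec hπ 0
      obtain ⟨mv1, -, -, he2⟩ := outcome12_spec hπ 1
      rw [hπ.1] at he1
      have hs1 : Step G s (π 1) := ⟨mv0, he1.symm⟩
      exact ⟨hs1, huniq hs1 ⟨mv1, he2.symm⟩ hsx0 hx0y⟩
    have hclause : ∀ c : G.State, c ≠ b → Step G ys c → ∀ ℓc, (ℓc = 2 ∨ ℓc = 3) →
        G.label c ℓc → ∃ σ2, ∀ π, IsOutcome G (ctxOf12 G σ1 σ2) s π →
          G.label (π 3) ℓc ∧ G.label (π 4) 4 := by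
      intro c hcb hyc ℓc hℓc hlc
      obtain ⟨mvc, hmvc⟩ := hyc
      refine ⟨fun v => if v = ys then mvc 2 else dmove G, fun π hπ => ?_⟩
      obtain ⟨hs1, h2ys⟩ := hstepf _ π hπ
      obtain ⟨mv2, -, hmv22, he3⟩ := outcome12_spec hπ 2
      rw [h2ys] at he3 hmv22
      rw [if_pos rfl] at hmv22
      have hπ3 : π 3 = c := by rw [he3, hctrl2 mv2 mvc hmv22, hmvc]
      have rc : Reach G s0 c := reach_tail rys ⟨mvc, hmvc⟩
      have hcm : G.label c 0 ∧ G.label c 6 := by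
        refine E5a h2 rc ?_
        rcases hℓc with h | h
        · exact Or.inl (h ▸ hlc)
        · exact Or.inr (h ▸ hlc)
      obtain ⟨mv3, hmv31, -, he4⟩ := outcome12_spec hπ 3
      rw [hπ3] at he4 hmv31
      have hσ1c : σ1 c = Aal c := by simp [hσ1, hcb]
      rw [hσ1c] at hmv31
      refine ⟨by rw [hπ3]; exact hlc, ?_⟩
      rw [he4]
      exact hAal c ⟨rc, hcm.1, hcm.2⟩ mv3 hmv31
    have rb : Reach G s0 b := reach_tail rys hyb
    have hbm : G.label b 0 ∧ G.label b 6 := by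
      refine E5a h2 rb ?_
      rcases hℓ23 with h | h
      · exact Or.inl (h ▸ hlb)
      · exact Or.inr (h ▸ hlb)
    have hbiff := E5b h2 rb hbm.1 hbm.2
    have hpv1 : ∃ σ2, ∀ π, IsOutcome G (ctxOf12 G σ1 σ2) s π →
        G.label (π 3) 2 ∧ G.label (π 4) 4 := by
      rcases hll with ⟨hl2, -⟩ | ⟨hl2, -⟩
      · exact hclause a hab hya 2 (Or.inl rfl) (hl2 ▸ hla)
      · have hu1b : u1 ≠ b := fun h => (hbiff.1 (h ▸ hu1l)) (hl2 ▸ hlb)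
        exact hclause u1 hu1b hyu1 2 (Or.inl rfl) hu1l
    have hpv2 : ∃ σ2, ∀ π, IsOutcome G (ctxOf12 G σ1 σ2) s π →
        G.label (π 3) 3 ∧ G.label (π 4) 4 := by
      rcases hll with ⟨hl2, -⟩ | ⟨hl2, -⟩
      · have hu2b : u2 ≠ b := fun h => (hbiff.1 (hl2 ▸ hlb)) (h ▸ hu2l)
        exact hclause u2 hu2b hyu2 3 (Or.inr rfl) hu2l
      · exact hclause a hab hya 3 (Or.inr rfl) (hl2 ▸ hla)
    have hconc := E9 h6 hr hm hsq σ1 hpv1 hpv2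
    obtain ⟨mvb', hmvb'⟩ := hyb
    set σ2b : G.State → G.Move := fun v => if v = ys then mvb' 2 else dmove G with hσ2b
    have hπout := cpath_outcome G (ctxOf12 G σ1 σ2b) s
    have hα := hconc σ2b _ hπout
    set π := cpath G (ctxOf12 G σ1 σ2b) s with hπdef
    obtain ⟨hs1, h2ys⟩ := hstepf σ2b π hπout
    obtain ⟨mv2, -, hmv22, he3⟩ := outcome12_spec hπout 2
    rw [h2ys] at he3 hmv22
    have hσ2bys : σ2b ys = mvb' 2 := by simp [hσ2b]
    rw [hσ2bys] at hmv22
    have hπ3 : π 3 = b := by rw [he3, hctrl2 mv2 mvb' hmv22, hmvb']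
    obtain ⟨mv3, hmv31, -, he4⟩ := outcome12_spec hπout 3
    rw [hπ3] at he4 hmv31
    have hσ1b : σ1 b = Abe b := by simp [hσ1]
    rw [hσ1b] at hmv31
    have h5' : G.label (π 4) 5 := by
      rw [he4]
      exact hAbe b ⟨rb, hbm.1, hbm.2⟩ mv3 hmv31
    have hstep4 : Step G b (π 4) := ⟨mv3, he4.symm⟩
    have h0 : G.label (π 4) 0 := (E6a h2 rb hbm.1 hbm.2 hstep4).1
    exact E4 h2 (reach_tail rb hstep4) h0 hα h5'
  refine ⟨u1, u2, ⟨x0, ys, hsx0, hx0y, hyu1⟩, ⟨x0, ys, hsx0, hx0y, hyu2⟩, hu1l, hu2l, ?_⟩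
  intro u hu3 hul
  obtain ⟨x, y, hsx, hxy, hyu⟩ := hu3
  have hyys : y = ys := huniq hsx hxy hsx0 hx0y
  rw [hyys] at hyu
  rcases hul with h | h
  · exact Or.inl (vkey u u1 hyu hyu1 2 3 (Or.inl ⟨rfl, rfl⟩) h hu1l)
  · exact Or.inr (vkey u u2 hyu hyu2 3 2 (Or.inr ⟨rfl, rfl⟩) h hu2l)
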